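/- Fix m ≥ 2 and let n = 2^m − 1. Let H be the m×n matrix over F₂ whose column indexed by j ∈ {1,…,n} is the binary representation of j, and let C = {x ∈ F₂ⁿ : Hx = 0} be the Hamming code of length n. Then the vectors v_{i,j} ∈ F₂ⁿ with support exactly {i, 2^j, i + 2^j} (coordinates indexed by {1,…,n}), for 1 ≤ j ≤ m−1 and 1 ≤ i < 2^j, form a basis of C. Consequently C has dimension 2^m − 1 − m and has a generator matrix all of whose rows have Hamming weight 3, i.e., the Hamming code admits a linear encoding with update-efficiency 3. -/

import Mathlib

section Aux

private lemma aux_pow_le {j m : ℕ} (hm : 2 ≤ m) (hjm : j ≤ m - 1) :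
    2 ^ j ≤ 2 ^ (m - 1) := Nat.pow_le_pow_right (by norm_num) hjm

private lemma aux_pow_succ (m : ℕ) (hm : 2 ≤ m) : 2 ^ (m - 1) * 2 = 2 ^ m := by
  rw [← pow_succ]; congr 1; omega

private lemma aux_bits {m j i : ℕ} (hm : 2 ≤ m) (hj1 : 1 ≤ j) (hjm : j ≤ m - 1)
    (hi1 : 1 ≤ i) (hi2 : i < 2 ^ j) (r : ℕ) :
    ((if Nat.testBit i r then (1 : ZMod 2) else 0) +
      (if Nat.testBit (2 ^ j) r then 1 else 0) +
      (if Nat.testBit (i + 2 ^ j) r then 1 else 0)) = 0 := by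
  have h3 : i + 2 ^ j = 2 ^ j * 1 + i := by ring
  rw [h3, Nat.testBit_two_pow_mul_add 1 hi2 r]
  rcases lt_trichotomy r j with h | h | h
  · have hne : j ≠ r := by omega
    rw [if_pos h, Nat.testBit_two_pow_of_ne hne]
    cases hb : Nat.testBit i r <;> simp [hb] <;> decide
  · subst h
    have h1 : Nat.testBit i r = false := Nat.testBit_lt_two_pow hi2
    simp [h1, Nat.testBit_two_pow_self, Nat.sub_self, Nat.testBit_one_zero]
    decide
  · have h1 : Nat.testBit i r = false :=
      Nat.testBit_lt_two_pow (lt_of_lt_of_le hi2 (Nat.pow_le_pow_right (by norm_num) h.le))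
    have h2 : Nat.testBit 1 (r - j) = false := by
      rw [← Bool.not_eq_true, Nat.testBit_one_eq_true_iff_self_eq_zero]
      omega
    have h4 : j ≠ r := by omega
    simp [h1, h2, Nat.testBit_two_pow_of_ne h4, if_neg (by omega : ¬ r < j)]

private lemma aux_top_inj {j i j' i' : ℕ} (hi : i < 2 ^ j) (hi' : i' < 2 ^ j')
    (h : i + 2 ^ j = i' + 2 ^ j') : j = j' ∧ i = i' := by
  rcases lt_trichotomy j j' with hlt | heq | hlt
  · have h1 : i + 2 ^ j < 2 ^ (j + 1) := by rw [pow_succ]; omega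
    have h2 : 2 ^ (j + 1) ≤ 2 ^ j' := Nat.pow_le_pow_right (by norm_num) hlt
    omega
  · exact ⟨heq, by subst heq; omega⟩
  · have h1 : i' + 2 ^ j' < 2 ^ (j' + 1) := by rw [pow_succ]; omega
    have h2 : 2 ^ (j' + 1) ≤ 2 ^ j := Nat.pow_le_pow_right (by norm_num) hlt
    omega

private lemma aux_top_ne_pow {j i : ℕ} (hi1 : 1 ≤ i) (hi2 : i < 2 ^ j) (r : ℕ) :
    i + 2 ^ j ≠ 2 ^ r := by
  rcases le_or_gt r j with h | h
  · have : 2 ^ r ≤ 2 ^ j := Nat.pow_le_pow_right (by norm_num) h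
    omega
  · have h1 : i + 2 ^ j < 2 ^ (j + 1) := by rw [pow_succ]; omega
    have h2 : 2 ^ (j + 1) ≤ 2 ^ r := Nat.pow_le_pow_right (by norm_num) h
    omega

private lemma aux_sum (k : ℕ) :
    ∑ j ∈ Finset.range k, (2 ^ (j + 1) - 1) = 2 ^ (k + 1) - 2 - k := by
  induction k with
  | zero => simp
  | succ k ih =>
    rw [Finset.sum_range_succ, ih]
    have h1 : k + 1 < 2 ^ (k + 1) := Nat.lt_two_pow_self
    have h2 : 2 ^ (k + 2) = 2 ^ (k + 1) * 2 := by rw [pow_succ]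
    omega

end Aux

private noncomputable instance idxFintype (m : ℕ) :
    Fintype {ji : ℕ × ℕ // 1 ≤ ji.1 ∧ ji.1 ≤ m - 1 ∧ 1 ≤ ji.2 ∧ ji.2 < 2 ^ ji.1} :=
  Fintype.ofInjective
    (fun ji => ((⟨ji.val.1, by obtain ⟨h1, h2, h3, h4⟩ := ji.property; omega⟩ : Fin (m + 1)),
      (⟨ji.val.2, by
        obtain ⟨h1, h2, h3, h4⟩ := ji.property
        have : 2 ^ ji.val.1 ≤ 2 ^ (m + 1) := Nat.pow_le_pow_right (by norm_num) (by omega)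
        omega⟩ : Fin (2 ^ (m + 1)))))
    (by
      rintro ⟨⟨j, i⟩, h⟩ ⟨⟨j', i'⟩, h'⟩ hh
      simp only [Prod.mk.injEq, Fin.mk.injEq] at hh
      exact Subtype.ext (Prod.ext hh.1 hh.2))

private def idxEquiv (m : ℕ) :
    {ji : ℕ × ℕ // 1 ≤ ji.1 ∧ ji.1 ≤ m - 1 ∧ 1 ≤ ji.2 ∧ ji.2 < 2 ^ ji.1} ≃
      (Σ j : Fin (m - 1), Fin (2 ^ ((j : ℕ) + 1) - 1)) where
  toFun ji := ⟨⟨ji.val.1 - 1, by obtain ⟨h1, h2, h3, h4⟩ := ji.property; omega⟩,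
    ⟨ji.val.2 - 1, by
      obtain ⟨h1, h2, h3, h4⟩ := ji.property
      simp only
      have e : ji.val.1 - 1 + 1 = ji.val.1 := by omega
      rw [e]; omega⟩⟩
  invFun x := ⟨(x.1.val + 1, x.2.val + 1), by
    have h2 := x.2.isLt
    have h1 := x.1.isLt
    have h3 : 1 ≤ 2 ^ ((x.1 : ℕ) + 1) := Nat.one_le_two_pow
    exact ⟨by omega, by omega, by omega, by dsimp only; omega⟩⟩
  left_inv ji := by
    obtain ⟨⟨j, i⟩, h1, h2, h3, h4⟩ := ji
    simp only at h1 h2 h3 h4 ⊢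
    exact Subtype.ext (Prod.ext (by simp; omega) (by simp; omega))
  right_inv x := rfl

private lemma idx_card (m : ℕ) (hm : 2 ≤ m) :
    Fintype.card {ji : ℕ × ℕ // 1 ≤ ji.1 ∧ ji.1 ≤ m - 1 ∧ 1 ≤ ji.2 ∧ ji.2 < 2 ^ ji.1} =
      2 ^ m - 1 - m := by
  rw [Fintype.card_congr (idxEquiv m), Fintype.card_sigma]
  simp only [Fintype.card_fin]
  rw [Fin.sum_univ_eq_sum_range (fun j => 2 ^ (j + 1) - 1) (m - 1), aux_sum]
  have e : m - 1 + 1 = m := by omega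
  rw [e]
  omega

set_option maxHeartbeats 2000000 in
theorem stmt_4 {m : ℕ} (hm : 2 ≤ m)
    (H : Matrix (Fin m) (Fin (2 ^ m - 1)) (ZMod 2))
    (hH : ∀ i j, H i j = if Nat.testBit ((j : ℕ) + 1) (i : ℕ) then 1 else 0)
    (C : Submodule (ZMod 2) (Fin (2 ^ m - 1) → ZMod 2))
    (hC : C = LinearMap.ker H.mulVecLin)
    (v : {ji : ℕ × ℕ // 1 ≤ ji.1 ∧ ji.1 ≤ m - 1 ∧ 1 ≤ ji.2 ∧ ji.2 < 2 ^ ji.1} →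
      (Fin (2 ^ m - 1) → ZMod 2))
    (hv : ∀ ji c, v ji c =
      if (c : ℕ) + 1 = ji.val.2 ∨ (c : ℕ) + 1 = 2 ^ ji.val.1 ∨
         (c : ℕ) + 1 = ji.val.2 + 2 ^ ji.val.1
      then 1 else 0) :
    LinearIndependent (ZMod 2) v ∧ (∀ ji, v ji ∈ C) ∧
    Submodule.span (ZMod 2) (Set.range v) = C ∧
    Module.finrank (ZMod 2) C = 2 ^ m - 1 - m ∧
    ∃ G : Fin (2 ^ m - 1 - m) → (Fin (2 ^ m - 1) → ZMod 2),
      LinearIndependent (ZMod 2) G ∧ Submodule.span (ZMod 2) (Set.range G) = C ∧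
      ∀ i, hammingNorm (G i) = 3 := by
  have hpm : 2 ^ (m - 1) * 2 = 2 ^ m := aux_pow_succ m hm
  have hpm1 : 1 ≤ 2 ^ (m - 1) := Nat.one_le_two_pow
  have hbnd : ∀ ji : {ji : ℕ × ℕ // 1 ≤ ji.1 ∧ ji.1 ≤ m - 1 ∧ 1 ≤ ji.2 ∧ ji.2 < 2 ^ ji.1},
      1 ≤ ji.val.1 ∧ ji.val.1 ≤ m - 1 ∧ 1 ≤ ji.val.2 ∧ ji.val.2 < 2 ^ ji.val.1 ∧
      2 ^ ji.val.1 ≤ 2 ^ (m - 1) ∧ 1 ≤ 2 ^ ji.val.1 := by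
    rintro ⟨⟨j, i⟩, h1, h2, h3, h4⟩
    exact ⟨h1, h2, h3, h4, aux_pow_le hm h2, Nat.one_le_two_pow⟩
  -- membership
  have hmem : ∀ ji, v ji ∈ C := by
    intro ji
    obtain ⟨hj1, hjm, hi1, hi2, hle, hpj1⟩ := hbnd ji
    obtain ⟨c1, hc1⟩ : ∃ c1 : Fin (2 ^ m - 1), (c1 : ℕ) = ji.val.2 - 1 :=
      ⟨⟨ji.val.2 - 1, by omega⟩, rfl⟩
    obtain ⟨c2, hc2⟩ : ∃ c2 : Fin (2 ^ m - 1), (c2 : ℕ) = 2 ^ ji.val.1 - 1 :=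
      ⟨⟨2 ^ ji.val.1 - 1, by omega⟩, rfl⟩
    obtain ⟨c3, hc3⟩ : ∃ c3 : Fin (2 ^ m - 1), (c3 : ℕ) = ji.val.2 + 2 ^ ji.val.1 - 1 :=
      ⟨⟨ji.val.2 + 2 ^ ji.val.1 - 1, by omega⟩, rfl⟩
    have n12 : c1 ≠ c2 := by rw [Ne, Fin.ext_iff, hc1, hc2]; omega
    have n13 : c1 ≠ c3 := by rw [Ne, Fin.ext_iff, hc1, hc3]; omega
    have n23 : c2 ≠ c3 := by rw [Ne, Fin.ext_iff, hc2, hc3]; omega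
    have hvv : v ji = Pi.single c1 1 + Pi.single c2 1 + Pi.single c3 1 := by
      funext c
      have e1 : ((c : ℕ) + 1 = ji.val.2) ↔ c = c1 := by
        rw [Fin.ext_iff, hc1]; omega
      have e2 : ((c : ℕ) + 1 = 2 ^ ji.val.1) ↔ c = c2 := by
        rw [Fin.ext_iff, hc2]; omega
      have e3 : ((c : ℕ) + 1 = ji.val.2 + 2 ^ ji.val.1) ↔ c = c3 := by
        rw [Fin.ext_iff, hc3]; omega
      rw [hv]
      simp only [Pi.add_apply, Pi.single_apply, e1, e2, e3]
      by_cases h1 : c = c1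
      · rw [if_pos (Or.inl h1), if_pos h1, if_neg (fun hh => n12 (h1.symm.trans hh)),
          if_neg (fun hh => n13 (h1.symm.trans hh)), add_zero, add_zero]
      · by_cases h2 : c = c2
        · rw [if_pos (Or.inr (Or.inl h2)), if_neg h1, if_pos h2,
            if_neg (fun hh => n23 (h2.symm.trans hh)), zero_add, add_zero]
        · by_cases h3 : c = c3
          · rw [if_pos (Or.inr (Or.inr h3)), if_neg h1, if_neg h2, if_pos h3,
              zero_add, zero_add]
          · rw [if_neg (fun hh => hh.elim h1 (fun hh2 => hh2.elim h2 h3)),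
              if_neg h1, if_neg h2, if_neg h3, add_zero, add_zero]
    rw [hC, LinearMap.mem_ker, hvv, map_add, map_add]
    simp only [Matrix.mulVecLin_apply, Matrix.mulVec_single_one]
    funext r
    simp only [Pi.add_apply, Pi.zero_apply, mul_one, Matrix.col_apply, hH]
    have d1 : (c1 : ℕ) + 1 = ji.val.2 := by omega
    have d2 : (c2 : ℕ) + 1 = 2 ^ ji.val.1 := by omega
    have d3 : (c3 : ℕ) + 1 = ji.val.2 + 2 ^ ji.val.1 := by omega
    rw [d1, d2, d3]
    exact aux_bits hm hj1 hjm hi1 hi2 (r : ℕ)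
  -- linear independence
  have hli : LinearIndependent (ZMod 2) v := by
    rw [Fintype.linearIndependent_iff]
    intro g hg
    by_contra hne
    push_neg at hne
    obtain ⟨ji0, hji0⟩ := hne
    classical
    have hsne : (Finset.univ.filter fun x => g x ≠ 0).Nonempty :=
      ⟨ji0, Finset.mem_filter.mpr ⟨Finset.mem_univ _, hji0⟩⟩
    obtain ⟨b, hb, hmax⟩ :=
      Finset.exists_max_image _ (fun x => x.val.2 + 2 ^ x.val.1) hsne
    rw [Finset.mem_filter] at hb
    obtain ⟨hbj1, hbjm, hbi1, hbi2, hble, hbp1⟩ := hbnd b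
    obtain ⟨c, hcc⟩ : ∃ c : Fin (2 ^ m - 1), (c : ℕ) = b.val.2 + 2 ^ b.val.1 - 1 :=
      ⟨⟨b.val.2 + 2 ^ b.val.1 - 1, by omega⟩, rfl⟩
    have hc1 : (c : ℕ) + 1 = b.val.2 + 2 ^ b.val.1 := by omega
    have hz : ∑ x, (g x • v x) c = 0 := by
      have h0 := congrFun hg c
      rwa [Finset.sum_apply] at h0
    rw [Finset.sum_eq_single b] at hz
    · rw [Pi.smul_apply, hv, if_pos (Or.inr (Or.inr hc1)), smul_eq_mul, mul_one] at hz
      exact hb.2 hz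
    · intro x _ hxb
      rcases eq_or_ne (g x) 0 with h | h
      · rw [Pi.smul_apply, h, zero_smul]
      · have hxm := hmax x (Finset.mem_filter.mpr ⟨Finset.mem_univ _, h⟩)
        obtain ⟨hxj1, hxjm, hxi1, hxi2, hxle, hxp1⟩ := hbnd x
        have hcond : ¬ ((c : ℕ) + 1 = x.val.2 ∨ (c : ℕ) + 1 = 2 ^ x.val.1 ∨
            (c : ℕ) + 1 = x.val.2 + 2 ^ x.val.1) := by
          rw [hc1]
          rintro (h1 | h2 | h3)
          · omega
          · exact aux_top_ne_pow hbi1 hbi2 _ h2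
          · obtain ⟨ej, ei⟩ := aux_top_inj hbi2 hxi2 h3
            exact hxb (Subtype.ext (Prod.ext ej.symm ei.symm))
        rw [Pi.smul_apply, hv, if_neg hcond, smul_zero]
    · intro hnb; exact absurd (Finset.mem_univ b) hnb
  -- rank of H
  have hrange : LinearMap.range H.mulVecLin = ⊤ := by
    rw [eq_top_iff, ← (Pi.basisFun (ZMod 2) (Fin m)).span_eq, Submodule.span_le]
    rintro x ⟨r, rfl⟩
    have hrle : 2 ^ (r : ℕ) ≤ 2 ^ (m - 1) :=
      Nat.pow_le_pow_right (by norm_num) (by omega)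
    have hr1 : 1 ≤ 2 ^ (r : ℕ) := Nat.one_le_two_pow
    obtain ⟨cr, hcr⟩ : ∃ cr : Fin (2 ^ m - 1), (cr : ℕ) = 2 ^ (r : ℕ) - 1 :=
      ⟨⟨2 ^ (r : ℕ) - 1, by omega⟩, rfl⟩
    refine ⟨Pi.single cr 1, ?_⟩
    rw [Matrix.mulVecLin_apply, Matrix.mulVec_single_one, Pi.basisFun_apply]
    funext r'
    simp only [Matrix.col_apply, hH, mul_one]
    have d : (cr : ℕ) + 1 = 2 ^ (r : ℕ) := by omega
    rw [d, Nat.testBit_two_pow, Pi.single_apply]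
    simp only [decide_eq_true_eq]
    by_cases h : r' = r
    · rw [if_pos (congrArg Fin.val h).symm, if_pos h]
    · rw [if_neg (fun hh => h (Fin.ext hh.symm)), if_neg h]
  have hrank := LinearMap.finrank_range_add_finrank_ker H.mulVecLin
  rw [hrange, finrank_top, Module.finrank_fin_fun, Module.finrank_fin_fun] at hrank
  have hfr : Module.finrank (ZMod 2) C = 2 ^ m - 1 - m := by rw [hC]; omega
  -- span
  have hcard :
      Fintype.card {ji : ℕ × ℕ // 1 ≤ ji.1 ∧ ji.1 ≤ m - 1 ∧ 1 ≤ ji.2 ∧ ji.2 < 2 ^ ji.1} =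
        2 ^ m - 1 - m := idx_card m hm
  haveI : Nonempty {ji : ℕ × ℕ // 1 ≤ ji.1 ∧ ji.1 ≤ m - 1 ∧ 1 ≤ ji.2 ∧ ji.2 < 2 ^ ji.1} :=
    ⟨⟨(1, 1), le_refl 1, by omega, le_refl 1, by norm_num⟩⟩
  have hspan : Submodule.span (ZMod 2) (Set.range v) = C := by
    let v' : _ → C := fun ji => ⟨v ji, hmem ji⟩
    have hli' : LinearIndependent (ZMod 2) v' :=
      LinearIndependent.of_comp C.subtype (by exact hli)
    have htop : Submodule.span (ZMod 2) (Set.range v') = ⊤ :=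
      hli'.span_eq_top_of_card_eq_finrank (hcard.trans hfr.symm)
    have hmap := congrArg (Submodule.map C.subtype) htop
    rw [Submodule.map_span, Submodule.map_top, Submodule.range_subtype,
      ← Set.range_comp] at hmap
    exact hmap
  -- Hamming weights
  have hnorm : ∀ ji, hammingNorm (v ji) = 3 := by
    intro ji
    obtain ⟨hj1, hjm, hi1, hi2, hle, hpj1⟩ := hbnd ji
    obtain ⟨c1, hc1⟩ : ∃ c1 : Fin (2 ^ m - 1), (c1 : ℕ) = ji.val.2 - 1 :=
      ⟨⟨ji.val.2 - 1, by omega⟩, rfl⟩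
    obtain ⟨c2, hc2⟩ : ∃ c2 : Fin (2 ^ m - 1), (c2 : ℕ) = 2 ^ ji.val.1 - 1 :=
      ⟨⟨2 ^ ji.val.1 - 1, by omega⟩, rfl⟩
    obtain ⟨c3, hc3⟩ : ∃ c3 : Fin (2 ^ m - 1), (c3 : ℕ) = ji.val.2 + 2 ^ ji.val.1 - 1 :=
      ⟨⟨ji.val.2 + 2 ^ ji.val.1 - 1, by omega⟩, rfl⟩
    have n12 : c1 ≠ c2 := by rw [Ne, Fin.ext_iff, hc1, hc2]; omega
    have n13 : c1 ≠ c3 := by rw [Ne, Fin.ext_iff, hc1, hc3]; omega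
    have n23 : c2 ≠ c3 := by rw [Ne, Fin.ext_iff, hc2, hc3]; omega
    have hset : (Finset.univ.filter fun c => v ji c ≠ 0) = {c1, c2, c3} := by
      ext c
      have e1 : ((c : ℕ) + 1 = ji.val.2) ↔ c = c1 := by
        rw [Fin.ext_iff, hc1]; omega
      have e2 : ((c : ℕ) + 1 = 2 ^ ji.val.1) ↔ c = c2 := by
        rw [Fin.ext_iff, hc2]; omega
      have e3 : ((c : ℕ) + 1 = ji.val.2 + 2 ^ ji.val.1) ↔ c = c3 := by
        rw [Fin.ext_iff, hc3]; omega
      simp only [Finset.mem_filter, Finset.mem_univ, true_and, Finset.mem_insert,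
        Finset.mem_singleton, hv, e1, e2, e3]
      split_ifs with h
      · exact ⟨fun _ => h, fun _ => one_ne_zero⟩
      · exact ⟨fun hh => absurd rfl hh, fun hh => absurd hh h⟩
    have : hammingNorm (v ji) = (Finset.univ.filter fun c => v ji c ≠ 0).card := rfl
    rw [this, hset]
    rw [Finset.card_insert_of_notMem (by
        intro hcm
        rcases Finset.mem_insert.mp hcm with h | h
        · exact n12 h
        · exact n13 (Finset.mem_singleton.mp h)),
      Finset.card_insert_of_notMem (fun hcm => n23 (Finset.mem_singleton.mp hcm)),
      Finset.card_singleton]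
  -- conclusion
  refine ⟨hli, hmem, hspan, hfr, ?_⟩
  have e := (Fintype.equivFinOfCardEq hcard).symm
  refine ⟨v ∘ e, hli.comp e e.injective, ?_, fun k => hnorm (e k)⟩
  rw [Set.range_comp, Equiv.range_eq_univ, Set.image_univ]
  exact hspan
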